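/- For every C₀ ≥ 1 there are constants c ≥ 1 and C > 0 with the following property (asymptote of the periodic Newtonian potential). Let a = (a_{ij}) be a real symmetric positive definite 2×2 matrix with A = det a ≥ 1 which is C₀-elliptic. Define, for (μ₁, μ₂, x, y) ∈ ℝ⁴, the periodic Green kernel G_a(μ₁, μ₂, x, y) = −(1/(4π²)) Σ_{n∈ℤ} 1/(a₁₁μ₁² + 2a₁₂μ₁μ₂ + a₂₂μ₂² + A((x+n)² + y²)), and write ϱ' = √(a₁₁μ₁² + 2a₁₂μ₁μ₂ + a₂₂μ₂² + Ay²). Then for every point with ϱ' ≥ c·A^{1/2}, the series converges absolutely and |G_a(μ₁, μ₂, x, y) + 1/(4π·√A·ϱ')| ≤ C·√A/ϱ'³. -/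

import Mathlib

/-- `C₀`-ellipticity of the symmetric matrix `(a_{ij})`. -/
def IsElliptic (C₀ a11 a12 a22 : ℝ) : Prop :=
  ∀ v1 v2 : ℝ,
    C₀⁻¹ * Real.sqrt (a11 * a22 - a12 ^ 2) * (v1 ^ 2 + v2 ^ 2)
        ≤ a11 * v1 ^ 2 + 2 * a12 * v1 * v2 + a22 * v2 ^ 2 ∧
      a11 * v1 ^ 2 + 2 * a12 * v1 * v2 + a22 * v2 ^ 2
        ≤ C₀ * Real.sqrt (a11 * a22 - a12 ^ 2) * (v1 ^ 2 + v2 ^ 2)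

open MeasureTheory Real

lemma base_key {A S : ℝ} (hA : 0 < A) (hS : 0 < S) :
    (fun t : ℝ => (S + A * t ^ 2)⁻¹)
      = fun t : ℝ => S⁻¹ * (1 + (t / Real.sqrt (S / A)) ^ 2)⁻¹ := by
  have hb2 : Real.sqrt (S / A) ^ 2 = S / A := Real.sq_sqrt (by positivity)
  funext t
  rw [div_pow, hb2, ← mul_inv]
  congr 1
  field_simp

lemma base_integrable {A S : ℝ} (hA : 0 < A) (hS : 0 < S) :
    Integrable (fun t : ℝ => (S + A * t ^ 2)⁻¹) := by
  have hb : (0:ℝ) < Real.sqrt (S / A) := Real.sqrt_pos.mpr (by positivity)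
  rw [base_key hA hS]
  exact ((integrable_inv_one_add_sq.comp_div hb.ne').const_mul _)

lemma base_integral {A S : ℝ} (hA : 0 < A) (hS : 0 < S) :
    ∫ t : ℝ, (S + A * t ^ 2)⁻¹ = π / (Real.sqrt A * Real.sqrt S) := by
  have hb : (0:ℝ) < Real.sqrt (S / A) := Real.sqrt_pos.mpr (by positivity)
  have hSS : Real.sqrt S * Real.sqrt S = S := Real.mul_self_sqrt hS.le
  have hsA : (0:ℝ) < Real.sqrt A := Real.sqrt_pos.mpr hA
  have hsS : (0:ℝ) < Real.sqrt S := Real.sqrt_pos.mpr hS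
  rw [base_key hA hS, MeasureTheory.integral_const_mul,
    Measure.integral_comp_div (fun y : ℝ => (1 + y ^ 2)⁻¹) (Real.sqrt (S/A)),
    integral_univ_inv_one_add_sq]
  rw [abs_of_pos hb, smul_eq_mul, Real.sqrt_div hS.le]
  field_simp
  linear_combination hSS


set_option maxHeartbeats 1000000 in
lemma keyE {A S : ℝ} (u s : ℝ) (hA : 1 ≤ A) (hAS : A ≤ S) (hs : |s| ≤ 1/2) :
    |(S + A * (u + s) ^ 2)⁻¹ + (S + A * (u - s) ^ 2)⁻¹ - 2 * (S + A * u ^ 2)⁻¹|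
      ≤ 42 * A / (S + A * u ^ 2) ^ 2 := by
  have hA0 : (0:ℝ) < A := by linarith
  have hS0 : (0:ℝ) < S := by linarith
  have hs2 : s ^ 2 ≤ 1/4 := by nlinarith [sq_abs s, abs_nonneg s]
  set D0 : ℝ := S + A * u ^ 2 with hD0
  set Dp : ℝ := S + A * (u + s) ^ 2 with hDp
  set Dm : ℝ := S + A * (u - s) ^ 2 with hDm
  have hD0pos : 0 < D0 := by positivity
  have hDppos : 0 < Dp := by positivity
  have hDmpos : 0 < Dm := by positivity
  have hAu : A * u ^ 2 ≤ D0 := by rw [hD0]; linarith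
  have hAD0 : A ≤ D0 := by rw [hD0]; nlinarith [sq_nonneg u]
  have hDpge : D0 / 4 ≤ Dp := by
    rw [hD0, hDp]; nlinarith [sq_nonneg (3*u + 4*s)]
  have hDmge : D0 / 4 ≤ Dm := by
    rw [hD0, hDm]; nlinarith [sq_nonneg (3*u - 4*s)]
  have hiden : Dp⁻¹ + Dm⁻¹ - 2 * D0⁻¹
      = (2 * ((2*A*u*s)^2 - A*s^2*(D0 + A*s^2))) / (Dp * Dm * D0) := by
    rw [hD0, hDp, hDm]
    field_simp
    ring
  have e1 : A * s^2 ≤ A / 4 := by nlinarith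
  have e2 : A * s^2 ≤ D0 / 4 := by linarith
  have f1 : A * s^2 * D0 ≤ (A / 4) * D0 := mul_le_mul_of_nonneg_right e1 hD0pos.le
  have f2 : (A * s^2) * (A * s^2) ≤ (A / 4) * (D0 / 4) :=
    mul_le_mul e1 e2 (by positivity) (by positivity)
  have f3 : A * (A * u^2) ≤ A * D0 := mul_le_mul_of_nonneg_left hAu hA0.le
  have f4a : A * (A * u^2) * s^2 ≤ A * D0 * s^2 := mul_le_mul_of_nonneg_right f3 (sq_nonneg s)
  have f4b : A * D0 * s^2 ≤ A * D0 * (1/4) :=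
    mul_le_mul_of_nonneg_left hs2 (by positivity)
  have fq : (0:ℝ) ≤ (2*A*u*s)^2 := sq_nonneg _
  have fp : (0:ℝ) ≤ A*s^2*(D0 + A*s^2) := by positivity
  clear_value D0 Dp Dm
  clear hD0 hDp hDm
  have hnum : |2 * ((2*A*u*s)^2 - A*s^2*(D0 + A*s^2))| ≤ (21/8) * A * D0 := by
    rw [abs_le]
    constructor
    · nlinarith [f1, f2]
    · nlinarith [f4a, f4b, fp]
  have hden : D0^3/16 ≤ Dp * Dm * D0 := by
    have h1 : (D0/4) * (D0/4) * D0 ≤ Dp * Dm * D0 :=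
      mul_le_mul_of_nonneg_right
        (mul_le_mul hDpge hDmge (by positivity) hDppos.le) hD0pos.le
    have h2 : D0^3/16 = (D0/4) * (D0/4) * D0 := by ring
    linarith
  rw [hiden, abs_div, abs_of_pos (by positivity : (0:ℝ) < Dp * Dm * D0)]
  calc |2 * ((2*A*u*s)^2 - A*s^2*(D0 + A*s^2))| / (Dp * Dm * D0)
      ≤ ((21/8) * A * D0) / (D0^3/16) :=
        div_le_div₀ (by positivity) hnum (by positivity) hden
    _ = 42 * A / D0 ^ 2 := by field_simp; ring


lemma cont_h {A S u : ℝ} (hA : 0 < A) (hS : 0 < S) :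
    Continuous fun s : ℝ => (S + A * (u + s) ^ 2)⁻¹ := by
  apply Continuous.inv₀ (by continuity)
  intro s
  positivity

lemma interval_err {A S : ℝ} (x : ℝ) (hA : 1 ≤ A) (hAS : A ≤ S) (n : ℤ) :
    |(∫ t in (-1/2 + (n:ℝ))..(-1/2 + (n:ℝ) + 1), (S + A * (x + t) ^ 2)⁻¹)
        - (S + A * (x + (n:ℝ)) ^ 2)⁻¹|
      ≤ 21 * A / (S + A * (x + (n:ℝ)) ^ 2) ^ 2 := by
  have hA0 : (0:ℝ) < A := by linarith
  have hS0 : (0:ℝ) < S := by linarith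
  set u : ℝ := x + (n:ℝ) with hu
  set h : ℝ → ℝ := fun s => (S + A * (u + s) ^ 2)⁻¹ with hh
  have hcont : Continuous h := cont_h hA0 hS0
  -- rewrite the integral as ∫_{-1/2}^{1/2} h
  have step1 : (∫ t in (-1/2 + (n:ℝ))..(-1/2 + (n:ℝ) + 1), (S + A * (x + t) ^ 2)⁻¹)
      = ∫ s in (-1/2 : ℝ)..(1/2 : ℝ), h s := by
    have := intervalIntegral.integral_comp_add_right
      (fun t : ℝ => (S + A * (x + t) ^ 2)⁻¹) (n : ℝ) (a := (-1/2:ℝ)) (b := (1/2:ℝ))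
    rw [show (-1/2 + (n:ℝ) + 1) = 1/2 + (n:ℝ) by ring, ← this]
    apply intervalIntegral.integral_congr
    intro s _
    simp only [hh, hu]
    ring_nf
  -- split and symmetrize
  have i1 : IntervalIntegrable h volume (-1/2 : ℝ) 0 := hcont.intervalIntegrable _ _
  have i2 : IntervalIntegrable h volume (0 : ℝ) (1/2 : ℝ) := hcont.intervalIntegrable _ _
  have step2 : (∫ s in (-1/2 : ℝ)..(1/2 : ℝ), h s)
      = (∫ s in (0:ℝ)..(1/2:ℝ), h (-s)) + ∫ s in (0:ℝ)..(1/2:ℝ), h s := by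
    rw [← intervalIntegral.integral_add_adjacent_intervals i1 i2]
    congr 1
    rw [intervalIntegral.integral_comp_neg h]
    norm_num
  have ineg : IntervalIntegrable (fun s => h (-s)) volume (0:ℝ) (1/2:ℝ) :=
    Continuous.intervalIntegrable (hcont.comp continuous_neg) _ _
  have step3 : (∫ s in (0:ℝ)..(1/2:ℝ), (2 * h 0)) = h 0 := by
    rw [intervalIntegral.integral_const, smul_eq_mul]
    ring
  have key : (∫ s in (-1/2 : ℝ)..(1/2 : ℝ), h s) - h 0
      = ∫ s in (0:ℝ)..(1/2:ℝ), (h (-s) + h s - 2 * h 0) := by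
    rw [intervalIntegral.integral_sub (ineg.add i2) (intervalIntegrable_const),
      intervalIntegral.integral_add ineg i2]
    rw [step2, step3]
  have h00 : h 0 = (S + A * u ^ 2)⁻¹ := by simp [hh]
  rw [step1, show (S + A * (x + (n:ℝ)) ^ 2)⁻¹ = h 0 by rw [h00],
    show (S + A * (x + (n:ℝ)) ^ 2) = S + A * u ^ 2 from rfl]
  rw [← Real.norm_eq_abs, key]
  have bound : ∀ s ∈ Set.uIoc (0:ℝ) (1/2:ℝ), ‖h (-s) + h s - 2 * h 0‖ ≤ 42 * A / (S + A * u ^ 2) ^ 2 := by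
    intro s hs
    rw [Set.uIoc_of_le (by norm_num : (0:ℝ) ≤ 1/2)] at hs
    have hs1 : |s| ≤ 1/2 := by
      rw [abs_le]; constructor <;> [linarith [hs.1]; linarith [hs.2]]
    have := keyE (A := A) (S := S) u s hA hAS hs1
    rw [Real.norm_eq_abs, h00]
    calc |h (-s) + h s - 2 * (S + A * u ^ 2)⁻¹|
        = |(S + A * (u + s) ^ 2)⁻¹ + (S + A * (u - s) ^ 2)⁻¹ - 2 * (S + A * u ^ 2)⁻¹| := by
          simp only [hh]
          rw [show u + -s = u - s by ring]
          ring_nf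
      _ ≤ 42 * A / (S + A * u ^ 2) ^ 2 := this
  calc ‖∫ s in (0:ℝ)..(1/2:ℝ), (h (-s) + h s - 2 * h 0)‖
      ≤ (42 * A / (S + A * u ^ 2) ^ 2) * |((1:ℝ)/2) - 0| :=
        intervalIntegral.norm_integral_le_of_norm_le_const bound
    _ = 21 * A / (S + A * u ^ 2) ^ 2 := by
        rw [abs_of_nonneg (by norm_num : (0:ℝ) ≤ 1/2 - 0)]
        ring


lemma natSummable {A S : ℝ} (hA : 0 < A) (hS : 0 < S) (w : ℝ) :
    Summable fun k : ℕ => (S + A * (w + (k:ℝ)) ^ 2)⁻¹ := by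
  set m : ℕ := ⌈|w|⌉₊ with hm
  have hwm : |w| ≤ (m:ℝ) := Nat.le_ceil _
  rw [← summable_nat_add_iff (m + 1)]
  have maj : Summable fun k : ℕ => A⁻¹ * (((k:ℝ) + 1) ^ 2)⁻¹ := by
    apply Summable.mul_left
    have base : Summable fun n : ℕ => 1 / (n:ℝ) ^ 2 :=
      summable_one_div_nat_pow.mpr one_lt_two
    have := (summable_nat_add_iff 1).mpr base
    apply this.congr
    intro k
    push_cast
    rw [one_div]
  apply Summable.of_nonneg_of_le (fun k => by positivity) _ maj
  intro k
  have h1 : ((k:ℝ) + 1) ≤ w + ((k + (m+1) : ℕ) : ℝ) := by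
    push_cast
    have : -(m:ℝ) ≤ w := by
      have := neg_abs_le w
      linarith
    linarith
  have h2 : ((k:ℝ) + 1) ^ 2 ≤ (w + ((k + (m+1) : ℕ) : ℝ)) ^ 2 := by
    apply pow_le_pow_left₀ (by positivity) h1
  have h3 : A * ((k:ℝ) + 1) ^ 2 ≤ S + A * (w + ((k + (m+1) : ℕ) : ℝ)) ^ 2 := by
    nlinarith
  calc (S + A * (w + ((k + (m+1) : ℕ) : ℝ)) ^ 2)⁻¹
      ≤ (A * ((k:ℝ) + 1) ^ 2)⁻¹ := by
        apply inv_anti₀ (by positivity) h3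
    _ = A⁻¹ * (((k:ℝ) + 1) ^ 2)⁻¹ := by rw [mul_inv]

lemma PhiSummable {A S : ℝ} (hA : 1 ≤ A) (hAS : A ≤ S) :
    Summable (fun k : ℕ => ((S + A * (k:ℝ) ^ 2) ^ 2)⁻¹) := by
  have hA0 : (0:ℝ) < A := by linarith
  have hS0 : (0:ℝ) < S := by linarith
  have base : Summable fun k : ℕ => (S + A * (k:ℝ) ^ 2)⁻¹ := by
    have := natSummable hA0 hS0 0
    simpa using this
  apply Summable.of_nonneg_of_le (fun k => by positivity) _ base
  intro k
  have h2 : (S + A * (k:ℝ)^2) ≤ (S + A * (k:ℝ)^2)^2 := by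
    nlinarith [sq_nonneg (k:ℝ), mul_nonneg hA0.le (sq_nonneg (k:ℝ))]
  exact inv_anti₀ (by positivity) h2

lemma PhiTsum {A S : ℝ} (hA : 1 ≤ A) (hAS : A ≤ S) :
    ∑' k : ℕ, ((S + A * (k:ℝ) ^ 2) ^ 2)⁻¹
      ≤ (1 + π) / (Real.sqrt A * Real.sqrt S * S) := by
  have hA0 : (0:ℝ) < A := by linarith
  have hS0 : (0:ℝ) < S := by linarith
  have hsA : (0:ℝ) < Real.sqrt A := Real.sqrt_pos.mpr hA0
  have hsS : (0:ℝ) < Real.sqrt S := Real.sqrt_pos.mpr hS0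
  have hSS : Real.sqrt S * Real.sqrt S = S := Real.mul_self_sqrt hS0.le
  have hsAS : Real.sqrt A ≤ Real.sqrt S := Real.sqrt_le_sqrt hAS
  set f2 : ℝ → ℝ := fun t => ((S + A * t ^ 2) ^ 2)⁻¹ with hf2
  have hptle : ∀ t : ℝ, f2 t ≤ S⁻¹ * (S + A * t ^ 2)⁻¹ := by
    intro t
    simp only [hf2]
    rw [← mul_inv]
    apply inv_anti₀ (by positivity)
    nlinarith [mul_nonneg (mul_nonneg hA0.le (sq_nonneg t))
      (by positivity : (0:ℝ) ≤ S + A * t ^ 2)]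
  have hcont : Continuous f2 := by
    apply Continuous.inv₀ (by continuity)
    intro t; positivity
  have int1 : Integrable (fun t : ℝ => S⁻¹ * (S + A * t ^ 2)⁻¹) :=
    (base_integrable hA0 hS0).const_mul _
  have int2 : Integrable f2 := by
    apply int1.mono hcont.aestronglyMeasurable
    filter_upwards with t
    rw [Real.norm_eq_abs, Real.norm_eq_abs, abs_of_pos (by positivity),
      abs_of_pos (by positivity : (0:ℝ) < S⁻¹ * (S + A * t ^ 2)⁻¹)]
    exact hptle t
  have intbound : ∫ t : ℝ, f2 t ≤ π / (Real.sqrt A * Real.sqrt S * S) := by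
    calc ∫ t : ℝ, f2 t ≤ ∫ t : ℝ, S⁻¹ * (S + A * t ^ 2)⁻¹ :=
          integral_mono int2 int1 hptle
      _ = S⁻¹ * (π / (Real.sqrt A * Real.sqrt S)) := by
          rw [MeasureTheory.integral_const_mul, base_integral hA0 hS0]
      _ = π / (Real.sqrt A * Real.sqrt S * S) := by
          field_simp
  have anti : ∀ N : ℕ, AntitoneOn f2 (Set.Icc (0:ℝ) (0 + (N:ℝ))) := by
    intro N a ha b hb hab
    simp only [hf2]
    have h1 : a^2 ≤ b^2 := by nlinarith [ha.1]
    have h2 : S + A * a^2 ≤ S + A * b^2 := by nlinarith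
    apply inv_anti₀ (by positivity)
    nlinarith [mul_le_mul h2 h2 (by positivity) (by positivity : (0:ℝ) ≤ S + A * b ^ 2)]
  have partial_bound : ∀ N : ℕ, ∑ i ∈ Finset.range N, f2 ((i:ℝ) + 1)
      ≤ π / (Real.sqrt A * Real.sqrt S * S) := by
    intro N
    have h1 := AntitoneOn.sum_le_integral (anti N)
    have h2 : (∫ t in (0:ℝ)..(0 + (N:ℝ)), f2 t) ≤ ∫ t : ℝ, f2 t := by
      rw [intervalIntegral.integral_of_le (by positivity)]
      apply setIntegral_le_integral int2
      filter_upwards with t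
      positivity
    have h3 : ∑ i ∈ Finset.range N, f2 ((0:ℝ) + ((i + 1 : ℕ) : ℝ))
        = ∑ i ∈ Finset.range N, f2 ((i:ℝ) + 1) := by
      apply Finset.sum_congr rfl
      intro i _
      push_cast
      ring_nf
    rw [h3] at h1
    linarith
  have sumshift : ∑' k : ℕ, ((S + A * ((k:ℝ)) ^ 2) ^ 2)⁻¹
      = f2 0 + ∑' k : ℕ, f2 ((k:ℝ) + 1) := by
    rw [Summable.tsum_eq_zero_add (PhiSummable hA hAS)]
    congr 1
    · simp [hf2]
    · apply tsum_congr
      intro k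
      push_cast
      norm_num [hf2]
  rw [sumshift]
  have t1 : ∑' k : ℕ, f2 ((k:ℝ) + 1) ≤ π / (Real.sqrt A * Real.sqrt S * S) :=
    Real.tsum_le_of_sum_range_le (fun n => by positivity) partial_bound
  have g1 : Real.sqrt A * Real.sqrt S ≤ S := by nlinarith
  have t2 : f2 0 ≤ 1 / (Real.sqrt A * Real.sqrt S * S) := by
    have e0 : f2 0 = (S^2)⁻¹ := by norm_num [hf2]
    have e : Real.sqrt A * Real.sqrt S * S ≤ S^2 := by
      nlinarith [mul_le_mul_of_nonneg_right g1 hS0.le]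
    rw [e0, ← one_div]
    exact one_div_le_one_div_of_le (by positivity) e
  have hsplit : (1 + π) / (Real.sqrt A * Real.sqrt S * S)
      = 1 / (Real.sqrt A * Real.sqrt S * S) + π / (Real.sqrt A * Real.sqrt S * S) := by
    ring
  linarith


lemma zsum_le {φ : ℝ → ℝ} {Φ : ℕ → ℝ} (x : ℝ) (hφ0 : ∀ t, 0 ≤ φ t) (hΦ : Summable Φ)
    (hb : ∀ (k : ℕ) (t : ℝ), (k:ℝ) ≤ |t| → φ t ≤ Φ k) :
    Summable (fun n : ℤ => φ (x + n)) ∧ ∑' n : ℤ, φ (x + n) ≤ 2 * ∑' k : ℕ, Φ k := by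
  set x' : ℝ := Int.fract x with hx'
  have hx0 : 0 ≤ x' := Int.fract_nonneg x
  have hx1 : x' < 1 := Int.fract_lt_one x
  set ψ : ℤ → ℝ := fun n => φ (x' + n) with hψ
  have hpos_le : ∀ k : ℕ, ψ (k : ℤ) ≤ Φ k := by
    intro k
    apply hb
    rw [abs_of_nonneg (by push_cast; linarith : (0:ℝ) ≤ x' + ((k:ℤ):ℝ))]
    push_cast
    linarith
  have hneg_le : ∀ k : ℕ, ψ (-((k:ℤ) + 1)) ≤ Φ k := by
    intro k
    apply hb
    have : x' + ((-((k:ℤ) + 1) : ℤ) : ℝ) = x' - (k:ℝ) - 1 := by push_cast; ring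
    rw [this, abs_of_nonpos (by linarith)]
    linarith
  have hpos : Summable fun k : ℕ => ψ (k : ℤ) :=
    Summable.of_nonneg_of_le (fun k => hφ0 _) hpos_le hΦ
  have hneg : Summable fun k : ℕ => ψ (-((k:ℤ) + 1)) :=
    Summable.of_nonneg_of_le (fun k => hφ0 _) hneg_le hΦ
  have hψs : Summable ψ := Summable.of_nat_of_neg_add_one hpos hneg
  have hfl : ∀ n : ℤ, φ (x + n) = ψ (n + ⌊x⌋) := by
    intro n
    simp only [hψ]
    congr 1
    push_cast
    rw [hx', Int.fract]
    ring
  have hequiv : (fun n : ℤ => φ (x + n)) = (ψ ∘ (Equiv.addRight ⌊x⌋)) := by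
    funext n
    simp [hfl n]
  have hsum : Summable (fun n : ℤ => φ (x + n)) := by
    rw [hequiv]
    exact (Equiv.summable_iff _).mpr hψs
  refine ⟨hsum, ?_⟩
  have htsum : ∑' n : ℤ, φ (x + n) = ∑' n : ℤ, ψ n := by
    rw [hequiv]
    exact Equiv.tsum_eq _ _
  rw [htsum, tsum_of_nat_of_neg_add_one hpos hneg]
  have b1 : ∑' k : ℕ, ψ (k:ℤ) ≤ ∑' k : ℕ, Φ k := Summable.tsum_le_tsum hpos_le hpos hΦ
  have b2 : ∑' k : ℕ, ψ (-((k:ℤ) + 1)) ≤ ∑' k : ℕ, Φ k := Summable.tsum_le_tsum hneg_le hneg hΦ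
  linarith


set_option maxHeartbeats 1000000 in
lemma main_est {A S : ℝ} (x : ℝ) (hA : 1 ≤ A) (hAS : A ≤ S) :
    Summable (fun n : ℤ => (S + A * ((x + (n:ℝ)) ^ 2))⁻¹) ∧
    |(∑' n : ℤ, (S + A * ((x + (n:ℝ)) ^ 2))⁻¹) - π / (Real.sqrt A * Real.sqrt S)|
      ≤ 42 * (1 + π) * Real.sqrt A / (Real.sqrt S) ^ 3 := by
  have hA0 : (0:ℝ) < A := by linarith
  have hS0 : (0:ℝ) < S := by linarith
  have hsA : (0:ℝ) < Real.sqrt A := Real.sqrt_pos.mpr hA0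
  have hsS : (0:ℝ) < Real.sqrt S := Real.sqrt_pos.mpr hS0
  have hSS : Real.sqrt S * Real.sqrt S = S := Real.mul_self_sqrt hS0.le
  have hAA : Real.sqrt A * Real.sqrt A = A := Real.mul_self_sqrt hA0.le
  -- integrability and integral of g
  have hgint : Integrable (fun t : ℝ => (S + A * ((x + t) ^ 2))⁻¹) := by
    have h1 := base_integrable hA0 hS0
    have := h1.comp_add_left x
    simpa using this
  have hgval : ∫ t : ℝ, (S + A * ((x + t) ^ 2))⁻¹ = π / (Real.sqrt A * Real.sqrt S) := by
    have h2 := integral_add_left_eq_self (μ := volume) (fun u : ℝ => (S + A * u ^ 2)⁻¹) x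
    rw [h2, base_integral hA0 hS0]
  -- summability of the series, via zsum_le with p = 1
  have hb1 : ∀ (k : ℕ) (t : ℝ), (k:ℝ) ≤ |t| → (S + A * (t ^ 2))⁻¹ ≤ (S + A * ((k:ℝ) ^ 2))⁻¹ := by
    intro k t hkt
    have h2 : (k:ℝ)^2 ≤ t^2 := by
      rw [← sq_abs t]
      exact pow_le_pow_left₀ (by positivity) hkt 2
    apply inv_anti₀ (by positivity)
    nlinarith
  have hΦ1 : Summable fun k : ℕ => (S + A * ((k:ℝ) ^ 2))⁻¹ := by
    have := natSummable hA0 hS0 0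
    simpa using this
  have S1 : Summable (fun n : ℤ => (S + A * ((x + (n:ℝ)) ^ 2))⁻¹) :=
    (zsum_le (φ := fun t => (S + A * t ^ 2)⁻¹) x (fun t => by positivity) hΦ1 hb1).1
  -- the error bound series β
  have hb2 : ∀ (k : ℕ) (t : ℝ), (k:ℝ) ≤ |t| →
      21 * A / (S + A * (t ^ 2)) ^ 2 ≤ 21 * A * ((S + A * ((k:ℝ) ^ 2)) ^ 2)⁻¹ := by
    intro k t hkt
    have h2 : (k:ℝ)^2 ≤ t^2 := by
      rw [← sq_abs t]
      exact pow_le_pow_left₀ (by positivity) hkt 2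
    rw [div_eq_mul_inv]
    apply mul_le_mul_of_nonneg_left _ (by positivity)
    apply inv_anti₀ (by positivity)
    have h3 : S + A * (k:ℝ)^2 ≤ S + A * t^2 := by nlinarith
    nlinarith [mul_le_mul h3 h3 (by positivity) (by positivity : (0:ℝ) ≤ S + A * t ^ 2)]
  have hΦ2 : Summable fun k : ℕ => 21 * A * ((S + A * ((k:ℝ) ^ 2)) ^ 2)⁻¹ :=
    (PhiSummable hA hAS).mul_left _
  have zs2 := zsum_le (φ := fun t => 21 * A / (S + A * t ^ 2) ^ 2) x
    (fun t => by positivity) hΦ2 hb2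
  have Sβ : Summable (fun n : ℤ => 21 * A / (S + A * ((x + (n:ℝ)) ^ 2)) ^ 2) := zs2.1
  have hβbound : ∑' n : ℤ, 21 * A / (S + A * ((x + (n:ℝ)) ^ 2)) ^ 2
      ≤ 42 * (1 + π) * Real.sqrt A / (Real.sqrt S) ^ 3 := by
    have h1 := zs2.2
    have h2 : ∑' k : ℕ, 21 * A * ((S + A * ((k:ℝ) ^ 2)) ^ 2)⁻¹
        = 21 * A * ∑' k : ℕ, ((S + A * ((k:ℝ) ^ 2)) ^ 2)⁻¹ := tsum_mul_left
    have h3 := PhiTsum hA hAS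
    have h4 : 2 * (21 * A * ∑' k : ℕ, ((S + A * ((k:ℝ) ^ 2)) ^ 2)⁻¹)
        ≤ 2 * (21 * A * ((1 + π) / (Real.sqrt A * Real.sqrt S * S))) := by
      apply mul_le_mul_of_nonneg_left _ (by norm_num)
      exact mul_le_mul_of_nonneg_left h3 (by positivity)
    have h5 : 2 * (21 * A * ((1 + π) / (Real.sqrt A * Real.sqrt S * S)))
        = 42 * (1 + π) * Real.sqrt A / (Real.sqrt S) ^ 3 := by
      rw [show (Real.sqrt S) ^ 3 = Real.sqrt S * Real.sqrt S * Real.sqrt S by ring]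
      have hAA2 : Real.sqrt A ^ 2 = A := Real.sq_sqrt hA0.le
      rw [hSS]
      field_simp
      linear_combination (-42:ℝ) * hAA2
    calc ∑' n : ℤ, 21 * A / (S + A * ((x + (n:ℝ)) ^ 2)) ^ 2
        ≤ 2 * ∑' k : ℕ, 21 * A * ((S + A * ((k:ℝ) ^ 2)) ^ 2)⁻¹ := h1
      _ = 2 * (21 * A * ∑' k : ℕ, ((S + A * ((k:ℝ) ^ 2)) ^ 2)⁻¹) := by rw [h2]
      _ ≤ 42 * (1 + π) * Real.sqrt A / (Real.sqrt S) ^ 3 := by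
          rw [← h5]; exact h4
  -- HasSum of interval integrals
  have H1 := hgint.hasSum_intervalIntegral (-1/2 : ℝ)
  refine ⟨S1, ?_⟩
  set err : ℤ → ℝ := fun n =>
    (∫ t in (-1/2 + (n:ℝ))..(-1/2 + (n:ℝ) + 1), (S + A * ((x + t) ^ 2))⁻¹)
      - (S + A * ((x + (n:ℝ)) ^ 2))⁻¹ with herr
  have hSerr : Summable err := H1.summable.sub S1
  have herrtsum : ∑' n : ℤ, err n
      = π / (Real.sqrt A * Real.sqrt S) - ∑' n : ℤ, (S + A * ((x + (n:ℝ)) ^ 2))⁻¹ := by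
    rw [herr, Summable.tsum_sub H1.summable S1, H1.tsum_eq, hgval]
  have herrle : ∀ n : ℤ, |err n| ≤ 21 * A / (S + A * ((x + (n:ℝ)) ^ 2)) ^ 2 := by
    intro n
    have := interval_err x hA hAS n
    simpa [herr] using this
  have hSabs : Summable (fun n : ℤ => |err n|) :=
    Summable.of_nonneg_of_le (fun n => abs_nonneg _) herrle Sβ
  have final : |∑' n : ℤ, err n| ≤ 42 * (1 + π) * Real.sqrt A / (Real.sqrt S) ^ 3 := by
    calc |∑' n : ℤ, err n| ≤ ∑' n : ℤ, |err n| := by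
          have h := norm_tsum_le_tsum_norm (f := err)
            (by simpa only [Real.norm_eq_abs] using hSabs)
          simpa only [Real.norm_eq_abs] using h
      _ ≤ ∑' n : ℤ, 21 * A / (S + A * ((x + (n:ℝ)) ^ 2)) ^ 2 := Summable.tsum_le_tsum herrle hSabs Sβ
      _ ≤ 42 * (1 + π) * Real.sqrt A / (Real.sqrt S) ^ 3 := hβbound
  rw [herrtsum] at final
  rw [abs_sub_comm] at final
  exact final

/-- asymptote of the periodic Newtonian potential
`G_a = −(1/4π²) Σ_{n∈ℤ} 1/(a₁₁μ₁² + 2a₁₂μ₁μ₂ + a₂₂μ₂² + A((x+n)² + y²))`: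
for `ϱ' ≥ c·A^{1/2}` the series converges absolutely and
`|G_a + 1/(4π√A·ϱ')| ≤ C√A/ϱ'³` where `ϱ' = √(a₁₁μ₁² + 2a₁₂μ₁μ₂ + a₂₂μ₂² + Ay²)`. -/
theorem statement9 : ∀ C₀ : ℝ, 1 ≤ C₀ → ∃ c C : ℝ, 1 ≤ c ∧ 0 < C ∧
    ∀ a11 a12 a22 : ℝ, 0 < a11 → 1 ≤ a11 * a22 - a12 ^ 2 → IsElliptic C₀ a11 a12 a22 →
    ∀ μ1 μ2 x y : ℝ,
      c * Real.sqrt (a11 * a22 - a12 ^ 2)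
        ≤ Real.sqrt (a11 * μ1 ^ 2 + 2 * a12 * μ1 * μ2 + a22 * μ2 ^ 2
            + (a11 * a22 - a12 ^ 2) * y ^ 2) →
      Summable (fun n : ℤ =>
        |(a11 * μ1 ^ 2 + 2 * a12 * μ1 * μ2 + a22 * μ2 ^ 2
          + (a11 * a22 - a12 ^ 2) * ((x + n) ^ 2 + y ^ 2))⁻¹|) ∧
      |(-(1 / (4 * Real.pi ^ 2)) * ∑' n : ℤ,
          (a11 * μ1 ^ 2 + 2 * a12 * μ1 * μ2 + a22 * μ2 ^ 2
            + (a11 * a22 - a12 ^ 2) * ((x + n) ^ 2 + y ^ 2))⁻¹)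
        + 1 / (4 * Real.pi * Real.sqrt (a11 * a22 - a12 ^ 2) *
            Real.sqrt (a11 * μ1 ^ 2 + 2 * a12 * μ1 * μ2 + a22 * μ2 ^ 2
              + (a11 * a22 - a12 ^ 2) * y ^ 2))|
      ≤ C * Real.sqrt (a11 * a22 - a12 ^ 2) /
          (Real.sqrt (a11 * μ1 ^ 2 + 2 * a12 * μ1 * μ2 + a22 * μ2 ^ 2
            + (a11 * a22 - a12 ^ 2) * y ^ 2)) ^ 3 := by
  intro C₀ _
  refine ⟨1, 5, le_refl 1, by norm_num, ?_⟩
  intro a11 a12 a22 _ hdet _ μ1 μ2 x y hρ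
  set A : ℝ := a11 * a22 - a12 ^ 2 with hAdef
  set Q : ℝ := a11 * μ1 ^ 2 + 2 * a12 * μ1 * μ2 + a22 * μ2 ^ 2 with hQdef
  set S : ℝ := Q + A * y ^ 2 with hSdef
  have hA : 1 ≤ A := hdet
  have hA0 : (0:ℝ) < A := by linarith
  have hsA1 : 1 ≤ Real.sqrt A := by
    rw [show (1:ℝ) = Real.sqrt 1 by rw [Real.sqrt_one]]
    exact Real.sqrt_le_sqrt hA
  have hρ' : Real.sqrt A ≤ Real.sqrt S := by linarith [hρ, one_mul (Real.sqrt A)]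
  have hsS1 : 1 ≤ Real.sqrt S := le_trans hsA1 hρ'
  have hS0 : (0:ℝ) < S := by
    by_contra h
    push_neg at h
    rw [Real.sqrt_eq_zero_of_nonpos h] at hsS1
    linarith
  have hAS : A ≤ S := by
    have h1 : Real.sqrt A ^ 2 ≤ Real.sqrt S ^ 2 :=
      pow_le_pow_left₀ (Real.sqrt_nonneg A) hρ' 2
    rwa [Real.sq_sqrt hA0.le, Real.sq_sqrt hS0.le] at h1
  obtain ⟨hsum, hest⟩ := main_est (A := A) (S := S) x hA hAS
  have hrw : ∀ n : ℤ, Q + A * ((x + (n:ℝ)) ^ 2 + y ^ 2) = S + A * ((x + (n:ℝ)) ^ 2) := by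
    intro n
    rw [hSdef]
    ring
  constructor
  · simp only [hrw]
    apply hsum.congr
    intro n
    exact (abs_of_pos (by positivity)).symm
  · simp only [hrw]
    have hπ : (0:ℝ) < π := Real.pi_pos
    have hsA : (0:ℝ) < Real.sqrt A := by linarith
    have hsS : (0:ℝ) < Real.sqrt S := by linarith
    set T : ℝ := ∑' n : ℤ, (S + A * ((x + (n:ℝ)) ^ 2))⁻¹ with hT
    have hid : (-(1 / (4 * π ^ 2)) * T) + 1 / (4 * π * Real.sqrt A * Real.sqrt S)
        = (1 / (4 * π ^ 2)) * (π / (Real.sqrt A * Real.sqrt S) - T) := by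
      field_simp
      ring
    rw [hid, abs_mul, abs_of_pos (by positivity : (0:ℝ) < 1 / (4 * π ^ 2)), abs_sub_comm]
    have step1 : (1 / (4 * π ^ 2)) * |T - π / (Real.sqrt A * Real.sqrt S)|
        ≤ (1 / (4 * π ^ 2)) * (42 * (1 + π) * Real.sqrt A / (Real.sqrt S) ^ 3) :=
      mul_le_mul_of_nonneg_left hest (by positivity)
    refine le_trans step1 ?_
    set X : ℝ := Real.sqrt A / (Real.sqrt S) ^ 3 with hX
    have hX0 : 0 ≤ X := by positivity
    have e1 : 42 * (1 + π) * Real.sqrt A / (Real.sqrt S) ^ 3 = (42 * (1 + π)) * X := by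
      rw [hX]; ring
    have e2 : 5 * Real.sqrt A / (Real.sqrt S) ^ 3 = 5 * X := by
      rw [hX]; ring
    rw [e1, e2]
    have hc : 0 ≤ 20 * π ^ 2 - 42 - 42 * π := by
      nlinarith [Real.pi_gt_d6, Real.pi_lt_d2]
    rw [div_mul_eq_mul_div, div_le_iff₀ (by positivity : (0:ℝ) < 4 * π ^ 2)]
    nlinarith [mul_nonneg hc hX0]
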